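/- Let K be a commutative ring with identity and let σ : ℕ → ℕ be a function such that σ(1) = 1, σ is nondecreasing, σ(m+n) ≤ σ(m) + σ(n) for all m, n ∈ ℕ, and lim_{n→∞} σ(n) = ∞. For n ∈ ℕ set G_n^σ := {(h,g) ∈ R(K) : h ∈ H^{σ(n)}(K), g ∈ N^n(K)}. Then each G_n^σ is a normal subgroup of R(K), the G_n^σ form a descending chain with trivial intersection (hence a filtration of R(K)), and [G_m^σ, G_n^σ] ⊆ G_{m+n}^σ for all m, n ∈ ℕ. -/

import Mathlib

open PowerSeries Finset

namespace RiordanPaper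

variable {K : Type*} [CommRing K]

noncomputable def comp (f g : PowerSeries K) : PowerSeries K :=
  PowerSeries.mk fun n => ∑ d ∈ Finset.range (n + 1), coeff d f * coeff n (g ^ d)

lemma coeff_comp (f g : PowerSeries K) (n : ℕ) :
    coeff n (comp f g) = ∑ d ∈ Finset.range (n + 1), coeff d f * coeff n (g ^ d) := by
  simp [comp]

lemma coeff_pow_eq_zero {g : PowerSeries K} (hg : constantCoeff g = 0) {n d : ℕ}
    (h : n < d) : coeff n (g ^ d) = 0 := by
  have hdvd : (X : PowerSeries K) ^ d ∣ g ^ d :=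
    pow_dvd_pow_of_dvd (PowerSeries.X_dvd_iff.2 hg) d
  exact (PowerSeries.X_pow_dvd_iff.1 hdvd) n h

lemma coeff_comp_of_lt {g : PowerSeries K} (hg : constantCoeff g = 0)
    (f : PowerSeries K) {n N : ℕ} (hn : n < N) :
    coeff n (comp f g) = ∑ d ∈ Finset.range N, coeff d f * coeff n (g ^ d) := by
  rw [coeff_comp]
  apply Finset.sum_subset
  · intro d hd
    simp only [Finset.mem_range] at hd ⊢
    omega
  · intro d _ hd'
    simp only [Finset.mem_range] at hd'
    rw [coeff_pow_eq_zero hg (by omega), mul_zero]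

lemma coeff_eval₂ {g : PowerSeries K} (hg : constantCoeff g = 0)
    (P : Polynomial K) (n : ℕ) :
    coeff n (Polynomial.eval₂ (C (R := K)) g P)
      = ∑ d ∈ Finset.range (n + 1), P.coeff d * coeff n (g ^ d) := by
  classical
  have h1 : P.natDegree < max (n + 1) (P.natDegree + 1) :=
    lt_of_lt_of_le (Nat.lt_succ_self _) (le_max_right _ _)
  rw [Polynomial.eval₂_eq_sum_range' (C (R := K)) h1 g, map_sum]
  have h2 : ∀ d ∈ Finset.range (max (n + 1) (P.natDegree + 1)),
      coeff n (C (P.coeff d) * g ^ d) = P.coeff d * coeff n (g ^ d) := fun d _ => by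
    rw [coeff_C_mul]
  rw [Finset.sum_congr rfl h2]
  symm
  apply Finset.sum_subset
  · intro d hd
    simp only [Finset.mem_range] at hd ⊢
    omega
  · intro d _ hd'
    simp only [Finset.mem_range] at hd'
    rw [coeff_pow_eq_zero hg (by omega), mul_zero]

lemma coeff_comp_eq_eval₂_trunc {g : PowerSeries K} (hg : constantCoeff g = 0)
    (f : PowerSeries K) {n N : ℕ} (hn : n < N) :
    coeff n (comp f g) = coeff n (Polynomial.eval₂ (C (R := K)) g (trunc N f)) := by
  rw [coeff_eval₂ hg, coeff_comp]
  apply Finset.sum_congr rfl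
  intro d hd
  simp only [Finset.mem_range] at hd
  rw [PowerSeries.coeff_trunc, if_pos (by omega)]

lemma mul_comp {g : PowerSeries K} (hg : constantCoeff g = 0) (f₁ f₂ : PowerSeries K) :
    comp (f₁ * f₂) g = comp f₁ g * comp f₂ g := by
  ext n
  have key : coeff n (comp (f₁ * f₂) g)
      = coeff n (Polynomial.eval₂ (C (R := K)) g (trunc (n + 1) f₁ * trunc (n + 1) f₂)) := by
    rw [coeff_eval₂ hg, coeff_comp]
    apply Finset.sum_congr rfl
    intro d hd
    simp only [Finset.mem_range] at hd
    congr 1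
    rw [Polynomial.coeff_mul, PowerSeries.coeff_mul]
    apply Finset.sum_congr rfl
    intro ab hab
    rw [Finset.HasAntidiagonal.mem_antidiagonal] at hab
    rw [PowerSeries.coeff_trunc, PowerSeries.coeff_trunc, if_pos (by omega), if_pos (by omega)]
  rw [key, Polynomial.eval₂_mul, PowerSeries.coeff_mul, PowerSeries.coeff_mul]
  apply Finset.sum_congr rfl
  intro ab hab
  rw [Finset.HasAntidiagonal.mem_antidiagonal] at hab
  rw [← coeff_comp_eq_eval₂_trunc hg f₁ (show ab.1 < n + 1 by omega),
    ← coeff_comp_eq_eval₂_trunc hg f₂ (show ab.2 < n + 1 by omega)]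

lemma one_comp (g : PowerSeries K) : comp (1 : PowerSeries K) g = 1 := by
  ext n
  rw [coeff_comp, Finset.sum_eq_single 0]
  · simp
  · intro d _ hd0
    simp [PowerSeries.coeff_one, hd0]
  · intro h
    simp at h

lemma comp_X (f : PowerSeries K) : comp f X = f := by
  ext n
  rw [coeff_comp, Finset.sum_eq_single n]
  · rw [coeff_X_pow, if_pos rfl, mul_one]
  · intro d _ hdn
    rw [coeff_X_pow, if_neg (fun h => hdn h.symm), mul_zero]
  · intro h
    simp at h

lemma X_comp {g : PowerSeries K} (hg : constantCoeff g = 0) : comp X g = g := by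
  ext n
  rcases Nat.eq_zero_or_pos n with hn | hn
  · subst hn
    rw [coeff_comp]
    simp [PowerSeries.coeff_X, coeff_zero_eq_constantCoeff_apply, hg]
  · rw [coeff_comp, Finset.sum_eq_single 1]
    · rw [coeff_one_X, pow_one, one_mul]
    · intro d _ hd1
      rw [PowerSeries.coeff_X, if_neg hd1, zero_mul]
    · intro h
      simp only [Finset.mem_range] at h
      omega

lemma constantCoeff_comp (f g : PowerSeries K) :
    constantCoeff (comp f g) = constantCoeff f := by
  rw [← coeff_zero_eq_constantCoeff_apply, coeff_comp]
  simp

lemma coeff_one_comp (f g : PowerSeries K) :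
    coeff 1 (comp f g) = coeff 1 f * coeff 1 g := by
  rw [coeff_comp]
  have : Finset.range 2 = {0, 1} := rfl
  rw [this, Finset.sum_insert (by simp), Finset.sum_singleton, pow_zero, pow_one]
  simp [PowerSeries.coeff_one]

lemma comp_assoc {g k : PowerSeries K} (hg : constantCoeff g = 0)
    (hk : constantCoeff k = 0) (f : PowerSeries K) :
    comp (comp f g) k = comp f (comp g k) := by
  have hpow : ∀ e : ℕ, (comp g k) ^ e = comp (g ^ e) k := by
    intro e
    induction e with
    | zero => simp [one_comp]
    | succ m ih => rw [pow_succ, pow_succ, ih, mul_comp hk]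
  ext n
  rw [coeff_comp, coeff_comp]
  have L1 : ∀ d ∈ Finset.range (n + 1), coeff d (comp f g) * coeff n (k ^ d)
      = ∑ e ∈ Finset.range (n + 1), coeff e f * coeff d (g ^ e) * coeff n (k ^ d) := by
    intro d hd
    simp only [Finset.mem_range] at hd
    rw [coeff_comp_of_lt hg f hd, Finset.sum_mul]
  rw [Finset.sum_congr rfl L1, Finset.sum_comm]
  apply Finset.sum_congr rfl
  intro e _
  rw [hpow e, coeff_comp, Finset.mul_sum]
  apply Finset.sum_congr rfl
  intro d _
  ring

/-- An element of the Riordan group: a pair `(h, g)` with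
`h = 1 + a₁x + ⋯` and `g = x + b₂x² + ⋯`. -/
@[ext]
structure RiordanElem (K : Type*) [CommRing K] where
  h : PowerSeries K
  g : PowerSeries K
  h_zero : constantCoeff h = 1
  g_zero : constantCoeff g = 0
  g_one : coeff 1 g = 1

namespace RiordanElem

noncomputable instance : Mul (RiordanElem K) :=
  ⟨fun a b => ⟨a.h * comp b.h a.g, comp b.g a.g,
    by rw [map_mul, a.h_zero, one_mul, constantCoeff_comp, b.h_zero],
    by rw [constantCoeff_comp, b.g_zero],
    by rw [coeff_one_comp, b.g_one, a.g_one, one_mul]⟩⟩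

noncomputable instance : One (RiordanElem K) :=
  ⟨⟨1, X, map_one _, constantCoeff_X, coeff_one_X⟩⟩

@[simp] lemma mul_h (a b : RiordanElem K) : (a * b).h = a.h * comp b.h a.g := rfl
@[simp] lemma mul_g (a b : RiordanElem K) : (a * b).g = comp b.g a.g := rfl
@[simp] lemma one_h : (1 : RiordanElem K).h = 1 := rfl
@[simp] lemma one_g : (1 : RiordanElem K).g = X := rfl

noncomputable instance instMonoid : Monoid (RiordanElem K) where
  mul_assoc a b c := by
    ext1
    · show (a.h * comp b.h a.g) * comp c.h (comp b.g a.g)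
        = a.h * comp (b.h * comp c.h b.g) a.g
      rw [mul_comp a.g_zero, ← comp_assoc b.g_zero a.g_zero, mul_assoc]
    · show comp c.g (comp b.g a.g) = comp (comp c.g b.g) a.g
      rw [comp_assoc b.g_zero a.g_zero]
  one_mul a := by
    ext1
    · show (1 : PowerSeries K) * comp a.h X = a.h
      rw [comp_X, one_mul]
    · show comp a.g X = a.g
      exact comp_X a.g
  mul_one a := by
    ext1
    · show a.h * comp 1 a.g = a.h
      rw [one_comp, mul_one]
    · show comp X a.g = a.g
      exact X_comp a.g_zero

end RiordanElem

/-- The Riordan group over `K`, realized as the units of the Riordan monoid. -/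
noncomputable abbrev RiordanGroup (K : Type*) [CommRing K] := (RiordanElem K)ˣ

/-- An element of the Nottingham group: `g = x + b₂x² + ⋯`. -/
@[ext]
structure NottinghamElem (K : Type*) [CommRing K] where
  g : PowerSeries K
  g_zero : constantCoeff g = 0
  g_one : coeff 1 g = 1

namespace NottinghamElem

noncomputable instance : Mul (NottinghamElem K) :=
  ⟨fun a b => ⟨comp b.g a.g,
    by rw [constantCoeff_comp, b.g_zero],
    by rw [coeff_one_comp, b.g_one, a.g_one, one_mul]⟩⟩

noncomputable instance : One (NottinghamElem K) :=
  ⟨⟨X, constantCoeff_X, coeff_one_X⟩⟩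

@[simp] lemma mul_g (a b : NottinghamElem K) : (a * b).g = comp b.g a.g := rfl
@[simp] lemma one_g : (1 : NottinghamElem K).g = X := rfl

noncomputable instance instMonoid : Monoid (NottinghamElem K) where
  mul_assoc a b c := by
    ext1
    show comp c.g (comp b.g a.g) = comp (comp c.g b.g) a.g
    rw [comp_assoc b.g_zero a.g_zero]
  one_mul a := by
    ext1
    show comp a.g X = a.g
    exact comp_X a.g
  mul_one a := by
    ext1
    show comp X a.g = a.g
    exact X_comp a.g_zero

end NottinghamElem

/-- The Nottingham group over `K`, realized as the units of the Nottingham monoid. -/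
noncomputable abbrev NottinghamGroup (K : Type*) [CommRing K] := (NottinghamElem K)ˣ

/-- `h` belongs to `H^n(K)`: the coefficients in degrees `1,…,n-1` vanish
(the constant-coefficient-one condition being imposed separately). -/
def IsHn (n : ℕ) (f : PowerSeries K) : Prop := ∀ i, 0 < i → i < n → coeff i f = 0

/-- `g` belongs to `N^n(K)`: the coefficients in degrees `2,…,n` vanish
(the conditions at degree `0`, `1` being imposed separately). -/
def IsNn (n : ℕ) (g : PowerSeries K) : Prop := ∀ j, 1 < j → j ≤ n → coeff j g = 0

/-- The subset `R^{m,n}(K) = H^m(K) ⋊ N^n(K)` of the Riordan group. -/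
def Rmn (K : Type*) [CommRing K] (m n : ℕ) : Set (RiordanGroup K) :=
  {u | IsHn m ((u : RiordanElem K).h) ∧ IsNn n ((u : RiordanElem K).g)}

/-- The subset `R^n(K) = H^n(K) ⋊ N^n(K)` of the Riordan group. -/
def Rn (K : Type*) [CommRing K] (n : ℕ) : Set (RiordanGroup K) := Rmn K n n



/-! ### Auxiliary congruence machinery -/

/-- Two power series agree in all coefficients of degree `≤ N`. -/
def EqUpTo (N : ℕ) (f f' : PowerSeries K) : Prop :=
  ∀ j, j ≤ N → coeff j f = coeff j f'

namespace EqUpTo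

lemma rfl' {N : ℕ} (f : PowerSeries K) : EqUpTo N f f := fun _ _ => rfl

lemma symm {N : ℕ} {f f' : PowerSeries K} (h : EqUpTo N f f') : EqUpTo N f' f :=
  fun j hj => (h j hj).symm

lemma trans {N : ℕ} {f f' f'' : PowerSeries K} (h : EqUpTo N f f') (h' : EqUpTo N f' f'') :
    EqUpTo N f f'' := fun j hj => (h j hj).trans (h' j hj)

lemma mono {N N' : ℕ} {f f' : PowerSeries K} (h : EqUpTo N f f') (hN : N' ≤ N) :
    EqUpTo N' f f' := fun j hj => h j (hj.trans hN)

lemma mul {N : ℕ} {f f' g g' : PowerSeries K} (hf : EqUpTo N f f') (hg : EqUpTo N g g') :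
    EqUpTo N (f * g) (f' * g') := by
  intro j hj
  rw [PowerSeries.coeff_mul, PowerSeries.coeff_mul]
  refine Finset.sum_congr rfl fun ab hab => ?_
  rw [Finset.HasAntidiagonal.mem_antidiagonal] at hab
  rw [hf ab.1 (by omega), hg ab.2 (by omega)]

lemma pow {N : ℕ} {g g' : PowerSeries K} (hg : EqUpTo N g g') (d : ℕ) :
    EqUpTo N (g ^ d) (g' ^ d) := by
  induction d with
  | zero => intro j hj; rw [pow_zero, pow_zero]
  | succ m ih => rw [pow_succ, pow_succ]; exact ih.mul hg

lemma compLeft {N : ℕ} {f f' : PowerSeries K} (hf : EqUpTo N f f') (g : PowerSeries K) :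
    EqUpTo N (comp f g) (comp f' g) := by
  intro j hj
  rw [coeff_comp, coeff_comp]
  refine Finset.sum_congr rfl fun d hd => ?_
  rw [Finset.mem_range] at hd
  rw [hf d (by omega)]

lemma compRight {N : ℕ} {g g' : PowerSeries K} (hg : EqUpTo N g g') (f : PowerSeries K) :
    EqUpTo N (comp f g) (comp f g') := by
  intro j hj
  rw [coeff_comp, coeff_comp]
  refine Finset.sum_congr rfl fun d _ => ?_
  rw [(hg.pow d) j hj]

end EqUpTo

lemma mem_Rmn_iff {M n : ℕ} (hM : 1 ≤ M) (u : RiordanGroup K) :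
    u ∈ Rmn K M n ↔ EqUpTo (M - 1) ((u : RiordanElem K).h) 1 ∧
      EqUpTo n ((u : RiordanElem K).g) X := by
  constructor
  · rintro ⟨hh, hg⟩
    refine ⟨fun j hj => ?_, fun j hj => ?_⟩
    · rcases Nat.eq_zero_or_pos j with rfl | hj0
      · rw [coeff_zero_eq_constantCoeff_apply, coeff_zero_eq_constantCoeff_apply,
          (u : RiordanElem K).h_zero, map_one]
      · rw [hh j hj0 (by omega), PowerSeries.coeff_one, if_neg (by omega)]
    · rcases Nat.lt_or_ge j 2 with hj2 | hj2
      · interval_cases j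
        · rw [coeff_zero_eq_constantCoeff_apply, coeff_zero_eq_constantCoeff_apply,
            (u : RiordanElem K).g_zero, constantCoeff_X]
        · rw [(u : RiordanElem K).g_one, coeff_one_X]
      · rw [hg j (by omega) hj, PowerSeries.coeff_X, if_neg (by omega)]
  · rintro ⟨hh, hg⟩
    refine ⟨fun i hi1 hi2 => ?_, fun j hj1 hj2 => ?_⟩
    · rw [hh i (by omega), PowerSeries.coeff_one, if_neg (by omega)]
    · rw [hg j hj2, PowerSeries.coeff_X, if_neg (by omega)]

/-- For `g = x + O(x^{m+1})`, the powers of `g` agree with powers of `X` up to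
degree `m + d - 1`. -/
lemma pow_eqUpTo_X {m : ℕ} (hm : 1 ≤ m) {g : PowerSeries K} (h0 : constantCoeff g = 0)
    (h1 : coeff 1 g = 1) (hN : IsNn m g) (d : ℕ) :
    EqUpTo (m + d - 1) (g ^ d) ((X : PowerSeries K) ^ d) := by
  induction d with
  | zero => intro j hj; rw [pow_zero, pow_zero]
  | succ d ih =>
    intro j hj
    rw [pow_succ, pow_succ, PowerSeries.coeff_mul, PowerSeries.coeff_mul]
    refine Finset.sum_congr rfl fun ab hab => ?_
    rw [Finset.HasAntidiagonal.mem_antidiagonal] at hab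
    rcases Nat.eq_zero_or_pos ab.2 with hk0 | hk1
    · rw [hk0, coeff_zero_eq_constantCoeff_apply, coeff_zero_eq_constantCoeff_apply, h0,
        constantCoeff_X, mul_zero, mul_zero]
    · rcases le_or_gt ab.2 m with hkm | hkm
      · have hg2 : coeff ab.2 g = coeff ab.2 X := by
          rcases eq_or_lt_of_le (Nat.succ_le_of_lt hk1) with h | h
          · rw [← h, h1, coeff_one_X]
          · rw [hN ab.2 h hkm, PowerSeries.coeff_X, if_neg (by omega)]
        rw [hg2, ih ab.1 (by omega)]
      · have hi : ab.1 < d := by omega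
        rw [coeff_pow_eq_zero h0 hi, coeff_X_pow, if_neg (by omega), zero_mul, zero_mul]

/-- For `f ∈ H^M` and `g = x + O(x^{m+1})`, `f ∘ g` agrees with `f` up to degree
`m + M - 1`. -/
lemma comp_H_eqUpTo {M m : ℕ} (hM : 1 ≤ M) (hm : 1 ≤ m) {f g : PowerSeries K}
    (hf : IsHn M f) (h0 : constantCoeff g = 0) (h1 : coeff 1 g = 1) (hN : IsNn m g) :
    EqUpTo (m + M - 1) (comp f g) f := by
  intro j hj
  rw [coeff_comp, Finset.sum_eq_single j]
  · rw [(pow_eqUpTo_X hm h0 h1 hN j) j (by omega), coeff_X_pow, if_pos rfl, mul_one]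
  · intro d hd hdj
    rw [Finset.mem_range] at hd
    rcases Nat.eq_zero_or_pos d with rfl | hd1
    · rw [pow_zero, PowerSeries.coeff_one, if_neg (by omega), mul_zero]
    · rcases lt_or_ge d M with hdM | hdM
      · rw [hf d hd1 hdM, zero_mul]
      · rw [(pow_eqUpTo_X hm h0 h1 hN d) j (by omega), coeff_X_pow, if_neg (by omega),
          mul_zero]
  · intro hj'
    exact absurd (Finset.mem_range.2 (Nat.lt_succ_self j)) hj'

/-- For `g₁ = x + O(x^{m+1})` and `g₂ = x + O(x^{n+1})`, composition is "abelian" up to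
degree `m + n`: `coeff j (g₂ ∘ g₁) = coeff j g₁ + coeff j g₂ - coeff j X`. -/
lemma comp_N_eqUpTo {m n : ℕ} (hm : 1 ≤ m) {g₁ g₂ : PowerSeries K}
    (h10 : constantCoeff g₁ = 0) (h11 : coeff 1 g₁ = 1) (hN1 : IsNn m g₁)
    (h20 : constantCoeff g₂ = 0) (h21 : coeff 1 g₂ = 1) (hN2 : IsNn n g₂) :
    ∀ j ≤ m + n, coeff j (comp g₂ g₁) = coeff j g₁ + coeff j g₂ - coeff j X := by
  intro j hj
  rcases Nat.eq_zero_or_pos j with rfl | hj1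
  · simp [coeff_zero_eq_constantCoeff_apply, constantCoeff_comp, h10, h20]
  · rw [coeff_comp]
    have step : ∀ d ∈ Finset.range (j + 1),
        coeff d g₂ * coeff j (g₁ ^ d)
          = coeff d g₂ * coeff j ((X : PowerSeries K) ^ d)
            + (if d = 1 then coeff j g₁ - coeff j X else 0) := by
      intro d hd
      rw [Finset.mem_range] at hd
      rcases Nat.eq_zero_or_pos d with rfl | hd1
      · rw [coeff_zero_eq_constantCoeff_apply, h20, if_neg (by omega), zero_mul, zero_mul,
          add_zero]
      · rcases eq_or_lt_of_le (Nat.succ_le_of_lt hd1) with h | h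
        · rw [← h, if_pos rfl, pow_one, pow_one, h21, one_mul, one_mul]
          ring
        · rcases le_or_gt d n with hdn | hdn
          · rw [hN2 d h hdn, zero_mul, zero_mul, if_neg (by omega), add_zero]
          · rw [(pow_eqUpTo_X hm h10 h11 hN1 d) j (by omega), if_neg (by omega), add_zero]
    rw [Finset.sum_congr rfl step, Finset.sum_add_distrib]
    have A : ∑ d ∈ Finset.range (j + 1), coeff d g₂ * coeff j ((X : PowerSeries K) ^ d)
        = coeff j g₂ := by
      rw [← coeff_comp, comp_X]
    have B : (∑ d ∈ Finset.range (j + 1),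
        (if d = 1 then coeff j g₁ - coeff j X else 0))
          = coeff j g₁ - coeff j X := by
      rw [Finset.sum_ite_eq' (Finset.range (j + 1)) 1
        (fun _ => coeff j g₁ - coeff j X), if_pos (Finset.mem_range.2 (by omega))]
    rw [A, B]
    ring

lemma one_mem_Rmn (M n : ℕ) : (1 : RiordanGroup K) ∈ Rmn K M n := by
  refine ⟨fun i hi1 _ => ?_, fun j hj1 _ => ?_⟩
  · show coeff i (1 : PowerSeries K) = 0
    rw [PowerSeries.coeff_one, if_neg (by omega)]
  · show coeff j (X : PowerSeries K) = 0
    rw [PowerSeries.coeff_X, if_neg (by omega)]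

/-- Key "quotient" lemma: if `u` and `w` agree up to the relevant degrees, then
`u⁻¹ * w` lies in `Rmn`. -/
lemma inv_mul_mem {M n : ℕ} (hM : 1 ≤ M) (u w : RiordanGroup K)
    (hh : EqUpTo (M - 1) ((u : RiordanElem K).h) ((w : RiordanElem K).h))
    (hg : EqUpTo n ((u : RiordanElem K).g) ((w : RiordanElem K).g)) :
    u⁻¹ * w ∈ Rmn K M n := by
  rw [mem_Rmn_iff hM]
  have hinv : ((u⁻¹ : RiordanGroup K) : RiordanElem K) * (u : RiordanElem K) = 1 :=
    u.inv_mul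
  have hgX : comp ((u : RiordanElem K).g) ((u⁻¹ : RiordanGroup K) : RiordanElem K).g = X :=
    congrArg RiordanElem.g hinv
  have hh1 : ((u⁻¹ : RiordanGroup K) : RiordanElem K).h *
      comp ((u : RiordanElem K).h) ((u⁻¹ : RiordanGroup K) : RiordanElem K).g = 1 :=
    congrArg RiordanElem.h hinv
  constructor
  · show EqUpTo (M - 1) (((u⁻¹ : RiordanGroup K) : RiordanElem K) * (w : RiordanElem K)).h 1
    rw [RiordanElem.mul_h]
    have c1 := (EqUpTo.rfl' (N := M - 1) ((u⁻¹ : RiordanGroup K) : RiordanElem K).h).mul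
      ((hh.symm).compLeft ((u⁻¹ : RiordanGroup K) : RiordanElem K).g)
    rw [hh1] at c1
    exact c1
  · show EqUpTo n (((u⁻¹ : RiordanGroup K) : RiordanElem K) * (w : RiordanElem K)).g X
    rw [RiordanElem.mul_g]
    have c2 := (hg.symm).compLeft ((u⁻¹ : RiordanGroup K) : RiordanElem K).g
    rw [hgX] at c2
    exact c2

lemma mul_mem_Rmn {M n : ℕ} (hM : 1 ≤ M) {u v : RiordanGroup K}
    (hu : u ∈ Rmn K M n) (hv : v ∈ Rmn K M n) : u * v ∈ Rmn K M n := by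
  rw [mem_Rmn_iff hM] at hu hv ⊢
  constructor
  · show EqUpTo (M - 1) ((u : RiordanElem K) * (v : RiordanElem K)).h 1
    rw [RiordanElem.mul_h]
    have c1 := (hv.1).compLeft ((u : RiordanElem K)).g
    rw [one_comp] at c1
    have c2 := (hu.1).mul c1
    rw [one_mul] at c2
    exact c2
  · show EqUpTo n ((u : RiordanElem K) * (v : RiordanElem K)).g X
    rw [RiordanElem.mul_g]
    have c1 := (hv.2).compLeft ((u : RiordanElem K)).g
    rw [X_comp (u : RiordanElem K).g_zero] at c1
    exact c1.trans hu.2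

lemma conj_mem_Rmn {M n : ℕ} (hM : 1 ≤ M) (hMn : M - 1 ≤ n) {u : RiordanGroup K}
    (v : RiordanGroup K) (hu : u ∈ Rmn K M n) : v * u * v⁻¹ ∈ Rmn K M n := by
  have h := (mem_Rmn_iff hM u).1 hu
  have key : (v⁻¹)⁻¹ * (u * v⁻¹) ∈ Rmn K M n := by
    refine inv_mul_mem hM (v⁻¹) (u * v⁻¹) ?_ ?_
    · show EqUpTo (M - 1) _ ((u : RiordanElem K) * ((v⁻¹ : RiordanGroup K) : RiordanElem K)).h
      rw [RiordanElem.mul_h]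
      have c1 := (h.2.mono hMn).compRight ((v⁻¹ : RiordanGroup K) : RiordanElem K).h
      rw [comp_X] at c1
      have c2 := (h.1).mul c1
      rw [one_mul] at c2
      exact c2.symm
    · show EqUpTo n _ ((u : RiordanElem K) * ((v⁻¹ : RiordanGroup K) : RiordanElem K)).g
      rw [RiordanElem.mul_g]
      have c1 := h.2.compRight ((v⁻¹ : RiordanGroup K) : RiordanElem K).g
      rw [comp_X] at c1
      exact c1.symm
  rw [inv_inv, ← mul_assoc] at key
  exact key

/-- for subadditive nondecreasing `σ` with `σ(1) = 1` and `σ(n) → ∞`, the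
sets `G_n^σ = H^{σ(n)}(K) ⋊ N^n(K)` are normal subgroups of `R(K)` forming a descending
chain with trivial intersection (a filtration), and `[G_m^σ, G_n^σ] ⊆ G_{m+n}^σ`. -/
theorem sigma_filtration (K : Type*) [CommRing K] (σ : ℕ → ℕ) (hσ1 : σ 1 = 1)
    (hmono : ∀ m n : ℕ, m ≤ n → σ m ≤ σ n)
    (hsub : ∀ m n : ℕ, 1 ≤ m → 1 ≤ n → σ (m + n) ≤ σ m + σ n)
    (hlim : Filter.Tendsto σ Filter.atTop Filter.atTop) :
    (∀ n : ℕ, 1 ≤ n → ∃ H : Subgroup (RiordanGroup K),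
      (H : Set (RiordanGroup K)) = Rmn K (σ n) n ∧ H.Normal) ∧
    (∀ n : ℕ, 1 ≤ n → Rmn K (σ (n + 1)) (n + 1) ⊆ Rmn K (σ n) n) ∧
    (⋂ n ∈ {n : ℕ | 1 ≤ n}, Rmn K (σ n) n) = {1} ∧
    (∀ m n : ℕ, 1 ≤ m → 1 ≤ n → ∀ a ∈ Rmn K (σ m) m, ∀ b ∈ Rmn K (σ n) n,
      a⁻¹ * b⁻¹ * a * b ∈ Rmn K (σ (m + n)) (m + n)) := by
  have hσpos : ∀ n, 1 ≤ n → 1 ≤ σ n := fun n hn => hσ1 ▸ hmono 1 n hn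
  have hσle : ∀ n, 1 ≤ n → σ n ≤ n := by
    intro n hn
    induction n with
    | zero => omega
    | succ k ih =>
      rcases Nat.eq_zero_or_pos k with rfl | hk
      · simpa using hσ1.le
      · have h1 := hsub k 1 hk le_rfl
        have h2 := ih hk
        omega
  refine ⟨?_, ?_, ?_, ?_⟩
  · -- normal subgroups
    intro n hn
    refine ⟨{ carrier := Rmn K (σ n) n
              mul_mem' := fun ha hb => mul_mem_Rmn (hσpos n hn) ha hb
              one_mem' := one_mem_Rmn _ _
              inv_mem' := ?_ }, rfl, ?_⟩
    · intro x hx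
      have h := (mem_Rmn_iff (hσpos n hn) x).1 hx
      have key := inv_mul_mem (hσpos n hn) x 1 h.1 h.2
      rwa [mul_one] at key
    · exact ⟨fun x hx g => conj_mem_Rmn (hσpos n hn)
        (by have := hσle n hn; omega) g hx⟩
  · -- descending chain
    intro n hn u hu
    exact ⟨fun i hi1 hi2 => hu.1 i hi1 (lt_of_lt_of_le hi2 (hmono n (n + 1) (by omega))),
      fun j hj1 hj2 => hu.2 j hj1 (by omega)⟩
  · -- trivial intersection
    ext u
    simp only [Set.mem_iInter, Set.mem_setOf_eq, Set.mem_singleton_iff]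
    constructor
    · intro hu
      have hval : (u : RiordanElem K) = 1 := by
        ext1
        · ext i
          rcases Nat.eq_zero_or_pos i with rfl | hi
          · rw [RiordanElem.one_h, coeff_zero_eq_constantCoeff_apply,
              (u : RiordanElem K).h_zero, coeff_zero_eq_constantCoeff_apply, map_one]
          · obtain ⟨n, hn1, hni⟩ : ∃ n, 1 ≤ n ∧ i < σ n := by
              obtain ⟨n, hn⟩ :=
                ((hlim.eventually_ge_atTop (i + 1)).and (Filter.eventually_ge_atTop 1)).exists
              exact ⟨n, hn.2, by omega⟩
            rw [(hu n hn1).1 i hi hni, RiordanElem.one_h, PowerSeries.coeff_one,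
              if_neg (by omega)]
        · ext j
          rw [RiordanElem.one_g]
          rcases Nat.lt_or_ge j 2 with hj2 | hj2
          · interval_cases j
            · rw [coeff_zero_eq_constantCoeff_apply, (u : RiordanElem K).g_zero,
                coeff_zero_eq_constantCoeff_apply, constantCoeff_X]
            · rw [(u : RiordanElem K).g_one, coeff_one_X]
          · rw [(hu j (by omega)).2 j (by omega) le_rfl, PowerSeries.coeff_X,
              if_neg (by omega)]
      exact Units.ext hval
    · rintro rfl
      intro n hn
      exact one_mem_Rmn _ _
  · -- commutators
    intro m n hm hn a ha b hb
    have hσm := hσpos m hm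
    have hσn := hσpos n hn
    have hsmn : 1 ≤ σ (m + n) := hσpos _ (by omega)
    have hσsub : σ (m + n) ≤ σ m + σ n := hsub m n hm hn
    have hσlem := hσle m hm
    have hσlen := hσle n hn
    have hg : EqUpTo (m + n) (((b * a : RiordanGroup K) : RiordanElem K).g)
        (((a * b : RiordanGroup K) : RiordanElem K).g) := by
      intro j hj
      show coeff j (((b : RiordanElem K) * (a : RiordanElem K)).g)
        = coeff j (((a : RiordanElem K) * (b : RiordanElem K)).g)
      rw [RiordanElem.mul_g, RiordanElem.mul_g,
        comp_N_eqUpTo hn (b : RiordanElem K).g_zero (b : RiordanElem K).g_one hb.2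
          (a : RiordanElem K).g_zero (a : RiordanElem K).g_one ha.2 j (by omega),
        comp_N_eqUpTo hm (a : RiordanElem K).g_zero (a : RiordanElem K).g_one ha.2
          (b : RiordanElem K).g_zero (b : RiordanElem K).g_one hb.2 j (by omega)]
      ring
    have c1 : EqUpTo (σ (m + n) - 1) (comp ((a : RiordanElem K).h) ((b : RiordanElem K).g))
        ((a : RiordanElem K).h) :=
      (comp_H_eqUpTo hσm hn ha.1 (b : RiordanElem K).g_zero (b : RiordanElem K).g_one
        hb.2).mono (by omega)
    have c2 : EqUpTo (σ (m + n) - 1) (comp ((b : RiordanElem K).h) ((a : RiordanElem K).g))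
        ((b : RiordanElem K).h) :=
      (comp_H_eqUpTo hσn hm hb.1 (a : RiordanElem K).g_zero (a : RiordanElem K).g_one
        ha.2).mono (by omega)
    have hh : EqUpTo (σ (m + n) - 1) (((b * a : RiordanGroup K) : RiordanElem K).h)
        (((a * b : RiordanGroup K) : RiordanElem K).h) := by
      have d1 := (EqUpTo.rfl' (N := σ (m + n) - 1) ((b : RiordanElem K).h)).mul c1
      have d2 := (EqUpTo.rfl' (N := σ (m + n) - 1) ((a : RiordanElem K).h)).mul c2
      intro j hj
      show coeff j (((b : RiordanElem K) * (a : RiordanElem K)).h)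
        = coeff j (((a : RiordanElem K) * (b : RiordanElem K)).h)
      rw [RiordanElem.mul_h, RiordanElem.mul_h, d1 j hj, d2 j hj, mul_comm]
    have key := inv_mul_mem hsmn (b * a) (a * b) hh hg
    have heq : a⁻¹ * b⁻¹ * a * b = (b * a)⁻¹ * (a * b) := by
      rw [mul_inv_rev]
      group
    rw [heq]
    exact key

end RiordanPaper
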